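/- For the concrete 4-state example: take S = {1,2,3,4}, T = 4, transition matrix P = (1/8)·[[0,4,2,2],[4,1,1,2],[2,1,1,4],[2,2,4,0]], initial distribution concentrated on state 2, and posterior pair-marginals induced by emission weights f_s(x_1)=f_s(x_4)=1{s=2}, f_s(x_2)=f_s(x_3)= A·1{s=1} + 1{s≠1} with A sufficiently large. Then the path (2,1,1,2) is the unique maximizer of the 2-block objective W_2(s^4) = p_{1,2}(s_1,s_2) + p_{2,3}(s_2,s_3) + p_{3,4}(s_3,s_4) (the sum of posterior probabilities of consecutive pairs), yet p(2,1,1,2) = 0 since P_{1,1} = 0; i.e., the minimizer of Rabiner's k = 2 block risk is inadmissible. -/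

import Mathlib

set_option maxRecDepth 8000
set_option maxHeartbeats 4000000

def e4' : (Fin 4 × Fin 4 × Fin 4 × Fin 4) ≃ (Fin 4 → Fin 4) where
  toFun p := ![p.1, p.2.1, p.2.2.1, p.2.2.2]
  invFun u := (u 0, u 1, u 2, u 3)
  left_inv := by decide
  right_inv := fun u => by funext i; fin_cases i <;> rfl

theorem sum_fn4' (F : (Fin 4 → Fin 4) → ℝ) :
    ∑ u, F u = ∑ i, ∑ j, ∑ k, ∑ l, F ![i, j, k, l] := by
  rw [← Equiv.sum_comp e4' F]
  simp [Fintype.sum_prod_type, e4']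

noncomputable def Rv (A : ℝ) : Fin 4 → ℝ := ![40*A, 16*A+6, 8*A+10, 16*A+12]
noncomputable def Jm (A : ℝ) : Matrix (Fin 4) (Fin 4) ℝ :=
  !![0, 16*A, 8*A, 16*A; 16*A, 1, 1, 4; 8*A, 1, 1, 8; 16*A, 4, 8, 0]

theorem key19 (A : ℝ) (hA : 10 ≤ A) (a b c d : Fin 4)
    (h : ¬(a = 1 ∧ b = 0 ∧ c = 0 ∧ d = 1)) :
    (if a = 1 then Rv A b else 0) + Jm A b c + (if d = 1 then Rv A c else 0) < 80 * A := by
  fin_cases a <;> fin_cases b <;> fin_cases c <;> fin_cases d <;>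
    simp_all [Rv, Jm] <;> linarith

open Finset in
theorem stmt19 (A : ℝ) (hA : 10 ≤ A)
    (P : Matrix (Fin 4) (Fin 4) ℝ)
    (hP : P = (1 / 8 : ℝ) • !![0, 4, 2, 2; 4, 1, 1, 2; 2, 1, 1, 4; 2, 2, 4, 0])
    (pi : Fin 4 → ℝ) (hpi : pi = fun s => if s = 1 then 1 else 0)
    (f : Fin 4 → Fin 4 → ℝ)
    (hf : f = fun t s =>
      if t = 0 ∨ t = 3 then (if s = 1 then 1 else 0) else (if s = 0 then A else 1))
    -- prior path probability and joint density with the data `x^4`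
    (prior joint : (Fin 4 → Fin 4) → ℝ)
    (hprior : ∀ u, prior u = pi (u 0) * (P (u 0) (u 1) * (P (u 1) (u 2) * P (u 2) (u 3))))
    (hjoint : ∀ u, joint u = prior u * ∏ t, f t (u t))
    (px : ℝ) (hpx : px = ∑ u, joint u)
    -- posterior pair-marginals `pm t a b = P(Y_{t+1} = a, Y_{t+2} = b | x^4)` (0-indexed)
    (pm : Fin 3 → Fin 4 → Fin 4 → ℝ)
    (hpm : ∀ t a b, pm t a b =
      (∑ u ∈ univ.filter (fun u : Fin 4 → Fin 4 => u t.castSucc = a ∧ u t.succ = b),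
        joint u) / px)
    -- the 2-block objective: sum of posterior probabilities of consecutive pairs
    (W2 : (Fin 4 → Fin 4) → ℝ)
    (hW2 : ∀ u, W2 u = ∑ t : Fin 3, pm t (u t.castSucc) (u t.succ)) :
    (∀ v : Fin 4 → Fin 4, v ≠ ![1, 0, 0, 1] → W2 v < W2 ![1, 0, 0, 1]) ∧
      prior ![1, 0, 0, 1] = 0 := by
  subst hP hpi hf
  have hD : (0:ℝ) < 80 * A + 28 := by linarith
  have hD1 : (0:ℝ) < (80 * A + 28) / 512 := by linarith
  have hpx' : px = (80 * A + 28) / 512 := by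
    rw [hpx, sum_fn4']
    simp only [hjoint, hprior, Fin.prod_univ_four, Fin.sum_univ_four, Matrix.smul_apply,
      Matrix.cons_val', Matrix.cons_val_zero, Matrix.cons_val_one, Matrix.head_cons,
      Matrix.cons_val_two, Matrix.tail_cons, Matrix.cons_val_three, Matrix.head_fin_const,
      Matrix.cons_val_fin_one, Matrix.empty_val', Matrix.of_apply, smul_eq_mul,
      Fin.reduceEq, if_true, if_false, or_true, true_or, or_false, false_or, ite_true,
      ite_false]
    ring
  have hS0 : ∀ a b, pm 0 a b = (if a = 1 then Rv A b else 0) / (80 * A + 28) := by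
    intro a b
    rw [hpm, Finset.sum_filter, sum_fn4', hpx']
    simp only [hjoint, hprior, Fin.prod_univ_four, Fin.sum_univ_four, Matrix.smul_apply,
      Matrix.cons_val', Matrix.cons_val_zero, Matrix.cons_val_one, Matrix.head_cons,
      Matrix.cons_val_two, Matrix.tail_cons, Matrix.cons_val_three, Matrix.head_fin_const,
      Matrix.cons_val_fin_one, Matrix.empty_val', Matrix.of_apply, smul_eq_mul,
      Fin.reduceEq, if_true, if_false, or_true, true_or, or_false, false_or, ite_true,
      ite_false, show (0:Fin 3).castSucc = (0:Fin 4) from rfl,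
      show (0:Fin 3).succ = (1:Fin 4) from rfl, mul_zero, zero_mul, mul_one, one_mul,
      add_zero, zero_add, ite_self]
    rw [div_eq_div_iff hD1.ne' hD.ne']
    fin_cases a <;> fin_cases b <;>
      · simp (config := { decide := true }) only [Rv, Jm, if_true, if_false, ite_true,
          ite_false, and_true, and_false, true_and, false_and, Matrix.cons_val_zero,
          Matrix.cons_val_one, Matrix.head_cons, Matrix.cons_val_two, Matrix.tail_cons,
          Matrix.cons_val_three, Matrix.of_apply, Matrix.cons_val', Matrix.empty_val',
          Matrix.head_fin_const, Matrix.cons_val_fin_one, Fin.mk_zero, Fin.mk_one,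
          show (⟨2, by omega⟩ : Fin 4) = (2 : Fin 4) from rfl,
          show (⟨3, by omega⟩ : Fin 4) = (3 : Fin 4) from rfl]
        ring
  have hS1 : ∀ a b, pm 1 a b = Jm A a b / (80 * A + 28) := by
    intro a b
    rw [hpm, Finset.sum_filter, sum_fn4', hpx']
    simp only [hjoint, hprior, Fin.prod_univ_four, Fin.sum_univ_four, Matrix.smul_apply,
      Matrix.cons_val', Matrix.cons_val_zero, Matrix.cons_val_one, Matrix.head_cons,
      Matrix.cons_val_two, Matrix.tail_cons, Matrix.cons_val_three, Matrix.head_fin_const,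
      Matrix.cons_val_fin_one, Matrix.empty_val', Matrix.of_apply, smul_eq_mul,
      Fin.reduceEq, if_true, if_false, or_true, true_or, or_false, false_or, ite_true,
      ite_false, show (1:Fin 3).castSucc = (1:Fin 4) from rfl,
      show (1:Fin 3).succ = (2:Fin 4) from rfl, mul_zero, zero_mul, mul_one, one_mul,
      add_zero, zero_add, ite_self]
    rw [div_eq_div_iff hD1.ne' hD.ne']
    fin_cases a <;> fin_cases b <;>
      · simp (config := { decide := true }) only [Rv, Jm, if_true, if_false, ite_true,
          ite_false, and_true, and_false, true_and, false_and, Matrix.cons_val_zero,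
          Matrix.cons_val_one, Matrix.head_cons, Matrix.cons_val_two, Matrix.tail_cons,
          Matrix.cons_val_three, Matrix.of_apply, Matrix.cons_val', Matrix.empty_val',
          Matrix.head_fin_const, Matrix.cons_val_fin_one, Fin.mk_zero, Fin.mk_one,
          show (⟨2, by omega⟩ : Fin 4) = (2 : Fin 4) from rfl,
          show (⟨3, by omega⟩ : Fin 4) = (3 : Fin 4) from rfl]
        ring
  have hS2 : ∀ a b, pm 2 a b = (if b = 1 then Rv A a else 0) / (80 * A + 28) := by
    intro a b
    rw [hpm, Finset.sum_filter, sum_fn4', hpx']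
    simp only [hjoint, hprior, Fin.prod_univ_four, Fin.sum_univ_four, Matrix.smul_apply,
      Matrix.cons_val', Matrix.cons_val_zero, Matrix.cons_val_one, Matrix.head_cons,
      Matrix.cons_val_two, Matrix.tail_cons, Matrix.cons_val_three, Matrix.head_fin_const,
      Matrix.cons_val_fin_one, Matrix.empty_val', Matrix.of_apply, smul_eq_mul,
      Fin.reduceEq, if_true, if_false, or_true, true_or, or_false, false_or, ite_true,
      ite_false, show (2:Fin 3).castSucc = (2:Fin 4) from rfl,
      show (2:Fin 3).succ = (3:Fin 4) from rfl, mul_zero, zero_mul, mul_one, one_mul,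
      add_zero, zero_add, ite_self]
    rw [div_eq_div_iff hD1.ne' hD.ne']
    fin_cases a <;> fin_cases b <;>
      · simp (config := { decide := true }) only [Rv, Jm, if_true, if_false, ite_true,
          ite_false, and_true, and_false, true_and, false_and, Matrix.cons_val_zero,
          Matrix.cons_val_one, Matrix.head_cons, Matrix.cons_val_two, Matrix.tail_cons,
          Matrix.cons_val_three, Matrix.of_apply, Matrix.cons_val', Matrix.empty_val',
          Matrix.head_fin_const, Matrix.cons_val_fin_one, Fin.mk_zero, Fin.mk_one,
          show (⟨2, by omega⟩ : Fin 4) = (2 : Fin 4) from rfl,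
          show (⟨3, by omega⟩ : Fin 4) = (3 : Fin 4) from rfl]
        ring
  have hW : ∀ u : Fin 4 → Fin 4, W2 u =
      ((if u 0 = 1 then Rv A (u 1) else 0) + Jm A (u 1) (u 2) +
        (if u 3 = 1 then Rv A (u 2) else 0)) / (80 * A + 28) := by
    intro u
    rw [hW2, Fin.sum_univ_three]
    simp only [show (0:Fin 3).castSucc = (0:Fin 4) from rfl,
      show (0:Fin 3).succ = (1:Fin 4) from rfl,
      show (1:Fin 3).castSucc = (1:Fin 4) from rfl,
      show (1:Fin 3).succ = (2:Fin 4) from rfl,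
      show (2:Fin 3).castSucc = (2:Fin 4) from rfl,
      show (2:Fin 3).succ = (3:Fin 4) from rfl]
    rw [hS0, hS1, hS2, ← add_div, ← add_div]
  have hstar : W2 ![1, 0, 0, 1] = 80 * A / (80 * A + 28) := by
    rw [hW]
    norm_num [Rv, Jm, show (![1, 0, 0, 1] : Fin 4 → Fin 4) 2 = 0 from rfl, show (![1, 0, 0, 1] : Fin 4 → Fin 4) 3 = 1 from rfl]
    ring
  constructor
  · intro v hv
    have h' : ¬(v 0 = 1 ∧ v 1 = 0 ∧ v 2 = 0 ∧ v 3 = 1) := by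
      rintro ⟨h0, h1, h2, h3⟩
      exact hv (by funext i; fin_cases i <;> simp [h0, h1, h2, h3])
    rw [hstar, hW v, div_lt_div_iff₀ hD hD]
    exact mul_lt_mul_of_pos_right (key19 A hA (v 0) (v 1) (v 2) (v 3) h') hD
  · rw [hprior]
    norm_num [show (![1, 0, 0, 1] : Fin 4 → Fin 4) 2 = 0 from rfl, show (![1, 0, 0, 1] : Fin 4 → Fin 4) 3 = 1 from rfl]
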